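/- Let 1 < p < ∞, let p' = p/(p−1), and let 0 ≤ b ≤ c satisfy bp' > 1 and cp' > 1. Then there is a constant C = C(p, b, c), independent of T, such that for every T ∈ (0,∞) and every measurable h : (0,T) → [0,∞), one has sup_{0<t<T} ⟨t⟩^b ∫_0^t min(1, (t−s)^{−c}) h(s) ds ≤ C (∫_0^T (⟨s⟩^b h(s))^p ds)^{1/p}. -/

import Mathlib

open MeasureTheory Set
open scoped ENNReal

lemma aux_tail {r : ℝ} (hr : 1 < r) :
    ∫⁻ u in Set.Ioi (1:ℝ), ENNReal.ofReal (u ^ (-r)) = ENNReal.ofReal (1/(r-1)) := by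
  rw [← ofReal_integral_eq_lintegral_ofReal
      (integrableOn_Ioi_rpow_of_lt (by linarith) one_pos)
      ((ae_restrict_iff' measurableSet_Ioi).2 (.of_forall fun u hu =>
        Real.rpow_nonneg (by linarith [mem_Ioi.1 hu]) _))]
  rw [integral_Ioi_rpow_of_lt (by linarith) one_pos, Real.one_rpow]
  have h1 : r - 1 ≠ 0 := by linarith
  have h2 : -r + 1 ≠ 0 := by intro h; apply h1; linarith
  congr 1
  field_simp
  ring

lemma aux_min {r : ℝ} (hr : 1 < r) {s : Set ℝ} (hs : s ⊆ Set.Ioi 0) :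
    ∫⁻ u in s, ENNReal.ofReal (min 1 (u ^ (-r))) ≤ ENNReal.ofReal (1 + 1/(r-1)) := by
  calc ∫⁻ u in s, ENNReal.ofReal (min 1 (u ^ (-r)))
      ≤ ∫⁻ u in Ioi (0:ℝ), ENNReal.ofReal (min 1 (u ^ (-r))) := lintegral_mono_set hs
    _ = ∫⁻ u in Ioc (0:ℝ) 1 ∪ Ioi 1, ENNReal.ofReal (min 1 (u ^ (-r))) := by
        rw [Ioc_union_Ioi_eq_Ioi zero_le_one]
    _ ≤ (∫⁻ u in Ioc (0:ℝ) 1, ENNReal.ofReal (min 1 (u ^ (-r))))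
        + ∫⁻ u in Ioi (1:ℝ), ENNReal.ofReal (min 1 (u ^ (-r))) := lintegral_union_le _ _ _
    _ ≤ ENNReal.ofReal 1 + ENNReal.ofReal (1/(r-1)) := by
        gcongr
        · calc ∫⁻ u in Ioc (0:ℝ) 1, ENNReal.ofReal (min 1 (u ^ (-r)))
              ≤ ∫⁻ _ in Ioc (0:ℝ) 1, 1 :=
                lintegral_mono fun u => ENNReal.ofReal_le_one.2 (min_le_left _ _)
            _ = 1 := by simp
            _ = ENNReal.ofReal 1 := by simp
        · calc ∫⁻ u in Ioi (1:ℝ), ENNReal.ofReal (min 1 (u ^ (-r)))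
              ≤ ∫⁻ u in Ioi (1:ℝ), ENNReal.ofReal (u ^ (-r)) :=
                lintegral_mono fun u => ENNReal.ofReal_le_ofReal (min_le_right _ _)
            _ = ENNReal.ofReal (1/(r-1)) := aux_tail hr
    _ = ENNReal.ofReal (1 + 1/(r-1)) := by
        rw [ENNReal.ofReal_add zero_le_one (le_of_lt (one_div_pos.2 (by linarith)))]

lemma sq1 (t : ℝ) : 1 ≤ Real.sqrt (1 + t ^ 2) := by
  nlinarith [Real.sq_sqrt (show (0:ℝ) ≤ 1 + t^2 by positivity),
    Real.sqrt_nonneg (1 + t^2)]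

lemma sq_pos (t : ℝ) : 0 < Real.sqrt (1 + t ^ 2) := lt_of_lt_of_le one_pos (sq1 t)

lemma sq_ge_self {t : ℝ} (ht : 0 ≤ t) : t ≤ Real.sqrt (1 + t ^ 2) := by
  nlinarith [Real.sq_sqrt (show (0:ℝ) ≤ 1 + t^2 by positivity),
    Real.sqrt_nonneg (1 + t^2)]

lemma sq_mono {s t : ℝ} (hs : 0 ≤ s) (hst : s ≤ t) :
    Real.sqrt (1 + s ^ 2) ≤ Real.sqrt (1 + t ^ 2) :=
  Real.sqrt_le_sqrt (by nlinarith)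

lemma sq_double (t : ℝ) : Real.sqrt (1 + t ^ 2) ≤ 2 * Real.sqrt (1 + (t/2) ^ 2) := by
  nlinarith [Real.sq_sqrt (show (0:ℝ) ≤ 1 + t^2 by positivity),
    Real.sq_sqrt (show (0:ℝ) ≤ 1 + (t/2)^2 by positivity),
    Real.sqrt_nonneg (1 + t^2), Real.sqrt_nonneg (1 + (t/2)^2)]

-- keyA : min 1 ((t/2)^(-c)) ≤ (√5 / √(1+t²))^c for t > 0, c ≥ 0
lemma keyA {c t : ℝ} (hc : 0 ≤ c) (ht : 0 < t) :
    min 1 ((t/2) ^ (-c)) ≤ (Real.sqrt 5 / Real.sqrt (1 + t ^ 2)) ^ c := by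
  have hA := sq_pos t
  rcases le_total t 2 with h2 | h2
  · calc min 1 ((t/2) ^ (-c)) ≤ 1 := min_le_left _ _
      _ = (1:ℝ) ^ c := (Real.one_rpow c).symm
      _ ≤ (Real.sqrt 5 / Real.sqrt (1 + t ^ 2)) ^ c := by
          apply Real.rpow_le_rpow zero_le_one _ hc
          rw [le_div_iff₀ hA, one_mul]
          calc Real.sqrt (1 + t ^ 2) ≤ Real.sqrt 5 := Real.sqrt_le_sqrt (by nlinarith)
      _ = _ := rfl
  · calc min 1 ((t/2) ^ (-c)) ≤ (t/2) ^ (-c) := min_le_right _ _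
      _ = (2/t) ^ c := by
          rw [Real.rpow_neg (by positivity), ← Real.inv_rpow (by positivity), inv_div]
      _ ≤ (Real.sqrt 5 / Real.sqrt (1 + t ^ 2)) ^ c := by
          apply Real.rpow_le_rpow (by positivity) _ hc
          rw [div_le_div_iff₀ ht hA]
          nlinarith [Real.sq_sqrt (show (0:ℝ) ≤ 1 + t^2 by positivity),
            Real.sq_sqrt (show (0:ℝ) ≤ 5 by norm_num),
            Real.sqrt_nonneg (1 + t^2), Real.sqrt_nonneg (5:ℝ),
            mul_nonneg (Real.sqrt_nonneg 5) (show (0:ℝ) ≤ t by linarith),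
            mul_pos two_pos hA]

-- keyB : ⟨s⟩^(-r) ≤ min 1 (s^(-r)) for s > 0, 0 ≤ r
lemma keyB {r s : ℝ} (hr : 0 ≤ r) (hs : 0 < s) :
    Real.sqrt (1 + s ^ 2) ^ (-r) ≤ min 1 (s ^ (-r)) := by
  refine le_min (Real.rpow_le_one_of_one_le_of_nonpos (sq1 s) (by linarith)) ?_
  exact Real.rpow_le_rpow_of_nonpos hs (sq_ge_self hs.le) (by linarith)

-- min power bound : (min 1 (u^(-c)))^q ≤ min 1 (u^(-(c*q))) for u > 0
lemma keyC {c q u : ℝ} (hc : 0 ≤ c) (hq : 0 ≤ q) (hu : 0 < u) :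
    (min 1 (u ^ (-c))) ^ q ≤ min 1 (u ^ (-(c*q))) := by
  have h1 : (u ^ (-c)) ^ q = u ^ (-(c*q)) := by
    rw [← Real.rpow_mul hu.le, neg_mul]
  rcases le_total (u ^ (-c)) 1 with h | h
  · rw [min_eq_right h]
    refine le_min ?_ ?_
    · calc (u ^ (-c)) ^ q ≤ 1 ^ q := Real.rpow_le_rpow (by positivity) h hq
        _ = 1 := Real.one_rpow q
    · exact le_of_eq h1
  · rw [min_eq_left h, Real.one_rpow]
    have : (1:ℝ) ≤ u ^ (-(c*q)) := by
      calc (1:ℝ) = 1 ^ q := (Real.one_rpow q).symm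
        _ ≤ (u ^ (-c)) ^ q := Real.rpow_le_rpow zero_le_one h hq
        _ = _ := h1
    rw [min_eq_left this]

lemma ker_bound {b c q : ℝ} (hb : 0 < b) (hbc : b ≤ c) (hq : 0 < q)
    (hbq : 1 < b * q) (hcq : 1 < c * q) {t : ℝ} (ht : 0 < t) :
    ∫⁻ s in Ioo (0:ℝ) t,
        ENNReal.ofReal ((min 1 ((t - s) ^ (-c)) * Real.sqrt (1 + s ^ 2) ^ (-b)) ^ q)
      ≤ ENNReal.ofReal
          ((Real.sqrt 5 ^ (c*q) * (1 + 1/(b*q-1)) + 2 ^ (b*q) * (1 + 1/(c*q-1)))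
            * Real.sqrt (1 + t ^ 2) ^ (-(b*q))) := by
  have hc : 0 < c := hb.trans_le hbc
  have hA0 : 0 < Real.sqrt (1 + t ^ 2) := sq_pos t
  have hA1 : 1 ≤ Real.sqrt (1 + t ^ 2) := sq1 t
  have hAb : 0 < 1 + 1/(b*q-1) := by
    have : 0 < 1/(b*q-1) := one_div_pos.2 (by linarith)
    linarith
  have hAc : 0 < 1 + 1/(c*q-1) := by
    have : 0 < 1/(c*q-1) := one_div_pos.2 (by linarith)
    linarith
  -- Part A
  have partA : ∫⁻ s in Ioo (0:ℝ) (t/2),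
      ENNReal.ofReal ((min 1 ((t - s) ^ (-c)) * Real.sqrt (1 + s ^ 2) ^ (-b)) ^ q)
      ≤ ENNReal.ofReal (Real.sqrt 5 ^ (c*q) * Real.sqrt (1 + t ^ 2) ^ (-(c*q)))
          * ENNReal.ofReal (1 + 1/(b*q-1)) := by
    have hmeas : Measurable fun s : ℝ =>
        ENNReal.ofReal (Real.sqrt 5 ^ (c*q) * Real.sqrt (1 + t ^ 2) ^ (-(c*q)))
          * ENNReal.ofReal (min 1 (s ^ (-(b*q)))) := by
      apply Measurable.const_mul
      exact (measurable_const.min (measurable_id.pow_const _)).ennreal_ofReal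
    calc ∫⁻ s in Ioo (0:ℝ) (t/2),
          ENNReal.ofReal ((min 1 ((t - s) ^ (-c)) * Real.sqrt (1 + s ^ 2) ^ (-b)) ^ q)
        ≤ ∫⁻ s in Ioo (0:ℝ) (t/2),
            ENNReal.ofReal (Real.sqrt 5 ^ (c*q) * Real.sqrt (1 + t ^ 2) ^ (-(c*q)))
              * ENNReal.ofReal (min 1 (s ^ (-(b*q)))) := by
          apply setLIntegral_mono hmeas
          intro s hs
          have hts : 0 < t - s := by have := hs.2; simp only [mem_Ioo] at hs; linarith [hs.2]
          have hs0 : 0 < s := hs.1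
          have hmin0 : (0:ℝ) ≤ min 1 ((t - s) ^ (-c)) :=
            le_min zero_le_one (Real.rpow_nonneg hts.le _)
          rw [← ENNReal.ofReal_mul (by positivity)]
          apply ENNReal.ofReal_le_ofReal
          have h1 : min 1 ((t - s) ^ (-c))
              ≤ (Real.sqrt 5 / Real.sqrt (1 + t ^ 2)) ^ c := by
            refine le_trans (min_le_min le_rfl ?_) (keyA hc.le ht)
            apply Real.rpow_le_rpow_of_nonpos (by linarith) (by simp only [mem_Ioo] at hs; linarith [hs.2]) (by linarith)
          calc (min 1 ((t - s) ^ (-c)) * Real.sqrt (1 + s ^ 2) ^ (-b)) ^ q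
              ≤ ((Real.sqrt 5 / Real.sqrt (1 + t ^ 2)) ^ c
                  * Real.sqrt (1 + s ^ 2) ^ (-b)) ^ q := by
                apply Real.rpow_le_rpow (by positivity)
                  (mul_le_mul_of_nonneg_right h1 (by positivity)) hq.le
            _ = ((Real.sqrt 5 / Real.sqrt (1 + t ^ 2)) ^ c) ^ q
                  * (Real.sqrt (1 + s ^ 2) ^ (-b)) ^ q :=
                Real.mul_rpow (by positivity) (by positivity)
            _ = (Real.sqrt 5 / Real.sqrt (1 + t ^ 2)) ^ (c*q)
                  * Real.sqrt (1 + s ^ 2) ^ (-(b*q)) := by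
                rw [← Real.rpow_mul (by positivity), ← Real.rpow_mul (by positivity),
                  neg_mul]
            _ ≤ (Real.sqrt 5 / Real.sqrt (1 + t ^ 2)) ^ (c*q) * min 1 (s ^ (-(b*q))) :=
                mul_le_mul_of_nonneg_left (keyB (by positivity) hs0) (by positivity)
            _ = Real.sqrt 5 ^ (c*q) * Real.sqrt (1 + t ^ 2) ^ (-(c*q))
                  * min 1 (s ^ (-(b*q))) := by
                rw [Real.div_rpow (Real.sqrt_nonneg 5) hA0.le, Real.rpow_neg hA0.le,
                  div_eq_mul_inv]
      _ = ENNReal.ofReal (Real.sqrt 5 ^ (c*q) * Real.sqrt (1 + t ^ 2) ^ (-(c*q)))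
            * ∫⁻ s in Ioo (0:ℝ) (t/2), ENNReal.ofReal (min 1 (s ^ (-(b*q)))) :=
          lintegral_const_mul' _ _ ENNReal.ofReal_ne_top
      _ ≤ _ := by
          gcongr
          exact aux_min hbq (fun x hx => hx.1)
  -- Part B
  have partB : ∫⁻ s in Ico (t/2) t,
      ENNReal.ofReal ((min 1 ((t - s) ^ (-c)) * Real.sqrt (1 + s ^ 2) ^ (-b)) ^ q)
      ≤ ENNReal.ofReal (2 ^ (b*q) * Real.sqrt (1 + t ^ 2) ^ (-(b*q)))
          * ENNReal.ofReal (1 + 1/(c*q-1)) := by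
    have hmeas : Measurable fun s : ℝ =>
        ENNReal.ofReal (2 ^ (b*q) * Real.sqrt (1 + t ^ 2) ^ (-(b*q)))
          * ENNReal.ofReal (min 1 ((t - s) ^ (-(c*q)))) := by
      apply Measurable.const_mul
      exact (measurable_const.min ((measurable_const.sub measurable_id).pow_const _)).ennreal_ofReal
    calc ∫⁻ s in Ico (t/2) t,
          ENNReal.ofReal ((min 1 ((t - s) ^ (-c)) * Real.sqrt (1 + s ^ 2) ^ (-b)) ^ q)
        ≤ ∫⁻ s in Ico (t/2) t,
            ENNReal.ofReal (2 ^ (b*q) * Real.sqrt (1 + t ^ 2) ^ (-(b*q)))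
              * ENNReal.ofReal (min 1 ((t - s) ^ (-(c*q)))) := by
          apply setLIntegral_mono hmeas
          intro s hs
          simp only [mem_Ico] at hs
          have hts : 0 < t - s := by linarith [hs.2]
          have hs0 : 0 < s := lt_of_lt_of_le (by linarith) hs.1
          have hmin0 : (0:ℝ) ≤ min 1 ((t - s) ^ (-c)) :=
            le_min zero_le_one (Real.rpow_nonneg hts.le _)
          rw [← ENNReal.ofReal_mul (by positivity)]
          apply ENNReal.ofReal_le_ofReal
          have hhalf : Real.sqrt (1 + t ^ 2) / 2 ≤ Real.sqrt (1 + s ^ 2) := by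
            have h1 := sq_double t
            have h2 : Real.sqrt (1 + (t/2) ^ 2) ≤ Real.sqrt (1 + s ^ 2) :=
              sq_mono (by linarith) hs.1
            linarith
          calc (min 1 ((t - s) ^ (-c)) * Real.sqrt (1 + s ^ 2) ^ (-b)) ^ q
              = (min 1 ((t - s) ^ (-c))) ^ q * (Real.sqrt (1 + s ^ 2) ^ (-b)) ^ q :=
                Real.mul_rpow hmin0 (by positivity)
            _ = (min 1 ((t - s) ^ (-c))) ^ q * Real.sqrt (1 + s ^ 2) ^ (-(b*q)) := by
                rw [← Real.rpow_mul (by positivity), neg_mul]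
            _ ≤ min 1 ((t - s) ^ (-(c*q)))
                  * (Real.sqrt (1 + t ^ 2) / 2) ^ (-(b*q)) := by
                apply mul_le_mul (keyC hc.le hq.le hts)
                  (Real.rpow_le_rpow_of_nonpos (by positivity) hhalf (by linarith))
                  (by positivity) (le_min zero_le_one (Real.rpow_nonneg hts.le _))
            _ = 2 ^ (b*q) * Real.sqrt (1 + t ^ 2) ^ (-(b*q))
                  * min 1 ((t - s) ^ (-(c*q))) := by
                have heq : (Real.sqrt (1 + t ^ 2) / 2) ^ (-(b*q))
                    = 2 ^ (b*q) * Real.sqrt (1 + t ^ 2) ^ (-(b*q)) := by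
                  rw [Real.rpow_neg (by positivity), ← Real.inv_rpow (by positivity),
                    inv_div, Real.div_rpow zero_le_two hA0.le, Real.rpow_neg hA0.le,
                    div_eq_mul_inv]
                rw [heq]
                ring
      _ = ENNReal.ofReal (2 ^ (b*q) * Real.sqrt (1 + t ^ 2) ^ (-(b*q)))
            * ∫⁻ s in Ico (t/2) t, ENNReal.ofReal (min 1 ((t - s) ^ (-(c*q)))) :=
          lintegral_const_mul' _ _ ENNReal.ofReal_ne_top
      _ ≤ _ := by
          gcongr
          have hpre : Ico (t/2) t = (fun s => t - s) ⁻¹' (Ioc 0 (t/2)) := by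
            ext x
            simp only [mem_Ico, mem_preimage, mem_Ioc, sub_pos]
            constructor <;> rintro ⟨h1, h2⟩ <;> constructor <;> linarith
          have hsub := (Measure.measurePreserving_sub_left volume t).setLIntegral_comp_preimage_emb
            (MeasurableEquiv.subLeft t).measurableEmbedding
            (fun u => ENNReal.ofReal (min 1 (u ^ (-(c*q))))) (Ioc 0 (t/2))
          rw [hpre]
          exact hsub.trans_le (aux_min hcq (fun x hx => hx.1))
  -- combine
  calc ∫⁻ s in Ioo (0:ℝ) t,
        ENNReal.ofReal ((min 1 ((t - s) ^ (-c)) * Real.sqrt (1 + s ^ 2) ^ (-b)) ^ q)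
      ≤ ∫⁻ s in Ioo (0:ℝ) (t/2) ∪ Ico (t/2) t,
          ENNReal.ofReal ((min 1 ((t - s) ^ (-c)) * Real.sqrt (1 + s ^ 2) ^ (-b)) ^ q) := by
        apply lintegral_mono_set
        intro x hx
        rcases lt_or_ge x (t/2) with h | h
        · exact Or.inl ⟨hx.1, h⟩
        · exact Or.inr ⟨h, hx.2⟩
    _ ≤ _ + _ := lintegral_union_le _ _ _
    _ ≤ ENNReal.ofReal (Real.sqrt 5 ^ (c*q) * Real.sqrt (1 + t ^ 2) ^ (-(c*q)))
          * ENNReal.ofReal (1 + 1/(b*q-1))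
        + ENNReal.ofReal (2 ^ (b*q) * Real.sqrt (1 + t ^ 2) ^ (-(b*q)))
          * ENNReal.ofReal (1 + 1/(c*q-1)) := add_le_add partA partB
    _ ≤ _ := by
        rw [← ENNReal.ofReal_mul (by positivity), ← ENNReal.ofReal_mul (by positivity),
          ← ENNReal.ofReal_add (by positivity) (by positivity)]
        apply ENNReal.ofReal_le_ofReal
        have hexp : Real.sqrt (1 + t ^ 2) ^ (-(c*q)) ≤ Real.sqrt (1 + t ^ 2) ^ (-(b*q)) := by
          apply Real.rpow_le_rpow_of_exponent_le hA1
          have : b * q ≤ c * q := mul_le_mul_of_nonneg_right hbc hq.le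
          linarith
        have key := mul_le_mul_of_nonneg_left hexp
          (show (0:ℝ) ≤ Real.sqrt 5 ^ (c*q) * (1 + 1/(b*q-1)) by positivity)
        nlinarith [key, mul_nonneg (Real.rpow_nonneg zero_le_two (b*q))
          (Real.rpow_nonneg hA0.le (-(b*q)))]

/-- Scalar kernel estimate behind the weighted sup-in-time estimates
(5.13)-(5.14*) of the paper: the weighted supremum of the convolution with the
kernel `min(1, (t-s)^{-c})` is controlled by the weighted `L_p` norm on `(0,T)`,
with a constant independent of `T`. -/
theorem stmt_3 (p : ℝ) (hp : 1 < p) (b c : ℝ) (hb : 0 ≤ b) (hbc : b ≤ c)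
    (hbp : 1 < b * (p / (p - 1))) (hcp : 1 < c * (p / (p - 1))) :
    ∃ C > 0, ∀ T : ℝ, 0 < T → ∀ h : ℝ → ℝ, Measurable h → (∀ s, 0 ≤ h s) →
      ∀ t ∈ Ioo (0:ℝ) T,
        ENNReal.ofReal (Real.sqrt (1 + t ^ 2) ^ b) *
            (∫⁻ s in Ioo (0:ℝ) t, ENNReal.ofReal (min 1 ((t - s) ^ (-c)) * h s))
          ≤ ENNReal.ofReal C *
            (∫⁻ s in Ioo (0:ℝ) T,
              ENNReal.ofReal (Real.sqrt (1 + s ^ 2) ^ b * h s) ^ p) ^ (1 / p) := by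
  set q : ℝ := p / (p - 1) with hqdef
  have hpq : p.HolderConjugate q := Real.HolderConjugate.conjExponent hp
  have hq : 0 < q := hpq.symm.left_pos
  have hb' : 0 < b := by nlinarith
  set M : ℝ := Real.sqrt 5 ^ (c*q) * (1 + 1/(b*q-1)) + 2 ^ (b*q) * (1 + 1/(c*q-1)) with hM
  have hM0 : 0 < M := by
    have h1 : 0 < 1/(b*q-1) := one_div_pos.2 (by linarith)
    have h2 : 0 < 1/(c*q-1) := one_div_pos.2 (by linarith)
    have h3 := Real.rpow_pos_of_pos (show (0:ℝ) < Real.sqrt 5 by positivity) (c*q)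
    have h4 := Real.rpow_pos_of_pos (show (0:ℝ) < 2 by norm_num) (b*q)
    rw [hM]
    nlinarith [mul_pos h3 (show (0:ℝ) < 1 + 1/(b*q-1) by linarith),
      mul_pos h4 (show (0:ℝ) < 1 + 1/(c*q-1) by linarith)]
  refine ⟨M ^ (1/q), Real.rpow_pos_of_pos hM0 _, ?_⟩
  intro T hT h hmeas hpos t htmem
  obtain ⟨ht0, htT⟩ := htmem
  -- pointwise factorization
  have hfact : ∀ s ∈ Ioo (0:ℝ) t, ENNReal.ofReal (min 1 ((t - s) ^ (-c)) * h s)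
      = ENNReal.ofReal (Real.sqrt (1 + s ^ 2) ^ b * h s)
        * ENNReal.ofReal (min 1 ((t - s) ^ (-c)) * Real.sqrt (1 + s ^ 2) ^ (-b)) := by
    intro s hs
    have hts : 0 < t - s := by linarith [hs.2]
    have hmin0 : (0:ℝ) ≤ min 1 ((t - s) ^ (-c)) :=
      le_min zero_le_one (Real.rpow_nonneg hts.le _)
    rw [← ENNReal.ofReal_mul (mul_nonneg (by positivity) (hpos s))]
    congr 1
    have hone : Real.sqrt (1 + s ^ 2) ^ b * Real.sqrt (1 + s ^ 2) ^ (-b) = 1 := by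
      rw [← Real.rpow_add (sq_pos s), add_neg_cancel, Real.rpow_zero]
    calc min 1 ((t - s) ^ (-c)) * h s
        = min 1 ((t - s) ^ (-c)) * h s
            * (Real.sqrt (1 + s ^ 2) ^ b * Real.sqrt (1 + s ^ 2) ^ (-b)) := by
          rw [hone, mul_one]
      _ = Real.sqrt (1 + s ^ 2) ^ b * h s
            * (min 1 ((t - s) ^ (-c)) * Real.sqrt (1 + s ^ 2) ^ (-b)) := by ring
  have hint : (∫⁻ s in Ioo (0:ℝ) t, ENNReal.ofReal (min 1 ((t - s) ^ (-c)) * h s))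
      = ∫⁻ s in Ioo (0:ℝ) t,
          ((fun s => ENNReal.ofReal (Real.sqrt (1 + s ^ 2) ^ b * h s))
            * fun s => ENNReal.ofReal
                (min 1 ((t - s) ^ (-c)) * Real.sqrt (1 + s ^ 2) ^ (-b))) s :=
    setLIntegral_congr_fun measurableSet_Ioo hfact
  have hGm : Measurable fun s : ℝ => ENNReal.ofReal (Real.sqrt (1 + s ^ 2) ^ b * h s) := by
    apply Measurable.ennreal_ofReal
    exact (((continuous_const.add (continuous_pow 2)).sqrt.measurable).pow_const b).mul hmeas
  have hWm : Measurable fun s : ℝ =>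
      ENNReal.ofReal (min 1 ((t - s) ^ (-c)) * Real.sqrt (1 + s ^ 2) ^ (-b)) := by
    apply Measurable.ennreal_ofReal
    exact (measurable_const.min ((measurable_const.sub measurable_id).pow_const _)).mul
      (((continuous_const.add (continuous_pow 2)).sqrt.measurable).pow_const _)
  have holder := ENNReal.lintegral_mul_le_Lp_mul_Lq (volume.restrict (Ioo (0:ℝ) t)) hpq
    hGm.aemeasurable hWm.aemeasurable
  have hWq : (∫⁻ s in Ioo (0:ℝ) t,
        ENNReal.ofReal (min 1 ((t - s) ^ (-c)) * Real.sqrt (1 + s ^ 2) ^ (-b)) ^ q)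
      ≤ ENNReal.ofReal (M * Real.sqrt (1 + t ^ 2) ^ (-(b*q))) := by
    have heq : ∀ s ∈ Ioo (0:ℝ) t,
        ENNReal.ofReal (min 1 ((t - s) ^ (-c)) * Real.sqrt (1 + s ^ 2) ^ (-b)) ^ q
        = ENNReal.ofReal
            ((min 1 ((t - s) ^ (-c)) * Real.sqrt (1 + s ^ 2) ^ (-b)) ^ q) := by
      intro s hs
      have hts : 0 < t - s := by linarith [hs.2]
      have hmin0 : (0:ℝ) ≤ min 1 ((t - s) ^ (-c)) :=
        le_min zero_le_one (Real.rpow_nonneg hts.le _)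
      exact ENNReal.ofReal_rpow_of_nonneg (by positivity) hq.le
    rw [setLIntegral_congr_fun measurableSet_Ioo heq]
    exact ker_bound hb' hbc hq hbp hcp ht0
  have hcomp : (ENNReal.ofReal (M * Real.sqrt (1 + t ^ 2) ^ (-(b*q)))) ^ (1/q)
      = ENNReal.ofReal (M ^ (1/q) * Real.sqrt (1 + t ^ 2) ^ (-b)) := by
    rw [ENNReal.ofReal_rpow_of_nonneg (by positivity) (by positivity)]
    congr 1
    rw [Real.mul_rpow hM0.le (by positivity), ← Real.rpow_mul (sq_pos t).le]
    congr 2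
    field_simp
  calc ENNReal.ofReal (Real.sqrt (1 + t ^ 2) ^ b) *
        ∫⁻ s in Ioo (0:ℝ) t, ENNReal.ofReal (min 1 ((t - s) ^ (-c)) * h s)
      ≤ ENNReal.ofReal (Real.sqrt (1 + t ^ 2) ^ b) *
          ((∫⁻ s in Ioo (0:ℝ) t,
              ENNReal.ofReal (Real.sqrt (1 + s ^ 2) ^ b * h s) ^ p) ^ (1/p) *
            (∫⁻ s in Ioo (0:ℝ) t,
              ENNReal.ofReal
                (min 1 ((t - s) ^ (-c)) * Real.sqrt (1 + s ^ 2) ^ (-b)) ^ q) ^ (1/q)) := by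
        rw [hint]
        exact mul_le_mul_right holder _
    _ ≤ ENNReal.ofReal (Real.sqrt (1 + t ^ 2) ^ b) *
          ((∫⁻ s in Ioo (0:ℝ) T,
              ENNReal.ofReal (Real.sqrt (1 + s ^ 2) ^ b * h s) ^ p) ^ (1/p) *
            ENNReal.ofReal (M ^ (1/q) * Real.sqrt (1 + t ^ 2) ^ (-b))) := by
        apply mul_le_mul_right
        apply mul_le_mul'
        · exact ENNReal.rpow_le_rpow
            (lintegral_mono_set (Ioo_subset_Ioo le_rfl htT.le)) (by positivity)
        · rw [← hcomp]
          exact ENNReal.rpow_le_rpow hWq (by positivity)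
    _ = (ENNReal.ofReal (Real.sqrt (1 + t ^ 2) ^ b)
          * ENNReal.ofReal (M ^ (1/q) * Real.sqrt (1 + t ^ 2) ^ (-b)))
          * (∫⁻ s in Ioo (0:ℝ) T,
              ENNReal.ofReal (Real.sqrt (1 + s ^ 2) ^ b * h s) ^ p) ^ (1/p) := by
        ring
    _ = ENNReal.ofReal (M ^ (1/q)) *
          (∫⁻ s in Ioo (0:ℝ) T,
            ENNReal.ofReal (Real.sqrt (1 + s ^ 2) ^ b * h s) ^ p) ^ (1/p) := by
        congr 1
        rw [← ENNReal.ofReal_mul (by positivity)]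
        congr 1
        rw [show Real.sqrt (1 + t ^ 2) ^ b * (M ^ (1/q) * Real.sqrt (1 + t ^ 2) ^ (-b))
            = M ^ (1/q) * (Real.sqrt (1 + t ^ 2) ^ b * Real.sqrt (1 + t ^ 2) ^ (-b)) from
          by ring, ← Real.rpow_add (sq_pos t), add_neg_cancel, Real.rpow_zero, mul_one]
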